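/- Let λ ∈ ℂ ∪ {∞}. Let W be the Witt algebra and let A(λ) and B(λ) be the W-modules defined below. Then the linear map f : B(λ) → A(λ) determined by f(B_n) = n·A_n for all n ∈ ℤ is a homomorphism of W-modules; its kernel is the line ℂ·B_0 and its image is the subspace spanned by {A_n : n ∈ ℤ, n ≠ 0}. -/

import Mathlib

/-- The coefficient `n(n+1)λ`, where `λ = ∞` (encoded by `none`) gives `n²`. -/
def lamTerm (lam : Option ℂ) (n : ℤ) : ℂ :=
  match lam with
  | some l => (n : ℂ) * ((n : ℂ) + 1) * l
  | none => (n : ℂ) ^ 2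

/-- the linear map `f : B(λ) → A(λ)` determined by `f(B_n) = n • A_n` is a
homomorphism of modules over the Witt algebra `W`; its kernel is the line `ℂ • B_0` and its
image is the span of `{A_n : n ≠ 0}`. -/
theorem stmt_0 (lam : Option ℂ)
    (W : Type) [LieRing W] [LieAlgebra ℂ W] (bL : Module.Basis ℤ ℂ W)
    (hW : ∀ n m : ℤ, ⁅bL n, bL m⁆ = ((m : ℂ) - (n : ℂ)) • bL (n + m))
    (M : Type) [AddCommGroup M] [Module ℂ M] [LieRingModule W M] [LieModule ℂ W M]
    (bB : Module.Basis ℤ ℂ M)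
    (hB : ∀ n m : ℤ,
      ⁅bL n, bB m⁆ = ((m : ℂ) - (if n + m = 0 then lamTerm lam n else 0)) • bB (n + m))
    (N : Type) [AddCommGroup N] [Module ℂ N] [LieRingModule W N] [LieModule ℂ W N]
    (bA : Module.Basis ℤ ℂ N)
    (hA : ∀ n m : ℤ,
      ⁅bL n, bA m⁆ = ((n : ℂ) + (m : ℂ) + (if m = 0 then lamTerm lam n else 0)) • bA (n + m))
    (f : M →ₗ[ℂ] N) (hf : ∀ n : ℤ, f (bB n) = (n : ℂ) • bA n) :
    (∀ (w : W) (x : M), f ⁅w, x⁆ = ⁅w, f x⁆) ∧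
    LinearMap.ker f = Submodule.span ℂ {bB 0} ∧
    LinearMap.range f = Submodule.span ℂ {y : N | ∃ n : ℤ, n ≠ 0 ∧ y = bA n} := by
  -- Part 1: f is a W-module homomorphism
  have key : ∀ n m : ℤ, f ⁅bL n, bB m⁆ = ⁅bL n, f (bB m)⁆ := by
    intro n m
    rw [hB, map_smul, hf, hf, lie_smul, hA, smul_smul, smul_smul]
    congr 1
    set T := lamTerm lam n with hT
    by_cases h1 : n + m = 0
    · have hc1 : (n : ℂ) + m = 0 := by exact_mod_cast congrArg (Int.cast : ℤ → ℂ) h1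
      by_cases h2 : m = 0
      · have h2c : (m : ℂ) = 0 := by exact_mod_cast congrArg (Int.cast : ℤ → ℂ) h2
        rw [if_pos h1, if_pos h2]
        push_cast
        linear_combination (-T) * hc1 + (-T) * h2c
      · rw [if_pos h1, if_neg h2]
        push_cast
        linear_combination (-T) * hc1
    · by_cases h2 : m = 0
      · have h2c : (m : ℂ) = 0 := by exact_mod_cast congrArg (Int.cast : ℤ → ℂ) h2
        rw [if_neg h1, if_pos h2]
        push_cast
        linear_combination (-T) * h2c
      · rw [if_neg h1, if_neg h2]
        push_cast
        ring
  have part1 : ∀ (w : W) (x : M), f ⁅w, x⁆ = ⁅w, f x⁆ := by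
    letI : LieRing (Module.End ℂ M) := LieRing.ofAssociativeRing
    letI : LieRing (Module.End ℂ N) := LieRing.ofAssociativeRing
    have hΦ : (LinearMap.llcomp ℂ M M N f).comp (LieModule.toEnd ℂ W M).toLinearMap
        = ((LinearMap.llcomp ℂ M N N).flip f).comp (LieModule.toEnd ℂ W N).toLinearMap := by
      apply bL.ext
      intro n
      apply bB.ext
      intro m
      simpa [LieModule.toEnd] using key n m
    intro w x
    have := LinearMap.congr_fun (LinearMap.congr_fun hΦ w) x
    simpa [LieModule.toEnd] using this
  -- coefficient lemma
  have repr_f : ∀ (x : M) (m : ℤ), bA.repr (f x) m = (m : ℂ) * bB.repr x m := by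
    intro x m
    have h : (Finsupp.lapply m).comp ((bA.repr : N →ₗ[ℂ] (ℤ →₀ ℂ)).comp f)
        = (m : ℂ) • ((Finsupp.lapply m).comp (bB.repr : M →ₗ[ℂ] (ℤ →₀ ℂ))) := by
      apply bB.ext
      intro k
      simp only [LinearMap.comp_apply, LinearMap.smul_apply, Finsupp.lapply_apply, hf,
        map_smul, Module.Basis.repr_self, Finsupp.smul_apply, Finsupp.single_apply]
      by_cases hk : k = m
      · subst hk; simp
      · simp [hk]
    have := LinearMap.congr_fun h x
    simpa using this
  refine ⟨part1, ?_, ?_⟩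
  · -- kernel
    apply le_antisymm
    · intro x hx
      have hx0 : f x = 0 := hx
      have hcoef : ∀ m : ℤ, (m : ℂ) * bB.repr x m = 0 := by
        intro m
        rw [← repr_f, hx0]; simp
      have hsupp : ∀ m : ℤ, m ≠ 0 → bB.repr x m = 0 := by
        intro m hm
        have := hcoef m
        have hm' : (m : ℂ) ≠ 0 := Int.cast_ne_zero.mpr hm
        exact (mul_eq_zero.mp this).resolve_left hm'
      have : x = (bB.repr x 0) • bB 0 := by
        apply bB.repr.injective
        ext m
        simp only [map_smul, Module.Basis.repr_self, Finsupp.smul_apply, Finsupp.single_apply]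
        by_cases hm : m = 0
        · subst hm; simp
        · rw [hsupp m hm]; simp [Ne.symm hm]
      rw [this]
      exact Submodule.smul_mem _ _ (Submodule.mem_span_singleton_self _)
    · rw [Submodule.span_le, Set.singleton_subset_iff]
      show f (bB 0) = 0
      rw [hf]; simp
  · -- range
    rw [LinearMap.range_eq_map, ← bB.span_eq, Submodule.map_span]
    apply le_antisymm
    · rw [Submodule.span_le]
      rintro y ⟨-, ⟨n, rfl⟩, rfl⟩
      rw [hf]
      by_cases hn : n = 0
      · subst hn; simp
      · exact Submodule.smul_mem _ _ (Submodule.subset_span ⟨n, hn, rfl⟩)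
    · rw [Submodule.span_le]
      rintro y ⟨n, hn, rfl⟩
      have : bA n = ((n : ℂ)⁻¹) • f (bB n) := by
        rw [hf, smul_smul, inv_mul_cancel₀ (Int.cast_ne_zero.mpr hn), one_smul]
      rw [this]
      exact Submodule.smul_mem _ _ (Submodule.subset_span (Set.mem_image_of_mem f (Set.mem_range_self n)))
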